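/- If F has a (finite or infinite) derivative at a nega-Q̃-irrational point x₀, then F′(x₀) = lim_{n→∞} Π_{j=1}^{n} (p̃_{i_j(x₀),j} / q̃_{i_j(x₀),j}), the limit of ratios of increments of F and of lengths over the nested cylinders containing x₀. -/

import Mathlib

open Finset Filter Topology MeasureTheory

noncomputable section

/-- `rowSum p n k = Σ_{i<k} p_{i,n}` (the numbers `β_{k,n}`). -/
def rowSum (p : ℕ → ℕ → ℝ) (n k : ℕ) : ℝ := ∑ i ∈ Finset.range k, p n i

/-- Index flip at even positions: `tw m f n i = f n i` for odd `n`, `f n (m n - i)` for even `n`. -/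
def tw (m : ℕ → ℕ) (f : ℕ → ℕ → ℝ) (n i : ℕ) : ℝ :=
  if Odd n then f n i else f n (m n - i)

/-- Tail value of the (nega-)expansion determined by `f` from position `k+1` on. -/
def negaShift (m : ℕ → ℕ) (f : ℕ → ℕ → ℝ) (d : ℕ → ℕ) (k : ℕ) : ℝ :=
  ∑' j : ℕ, tw m (rowSum f) (k + j + 1) (d (k + j + 1)) *
    ∏ t ∈ Finset.Icc (k + 1) (k + j), tw m f t (d t)

/-- The nega-expansion value: `negaVal m f d = β̃_{d₁,1} + Σ_{k≥2} β̃_{d_k,k} Π_{j<k} f̃_{d_j,j}`. -/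
def negaVal (m : ℕ → ℕ) (f : ℕ → ℕ → ℝ) (d : ℕ → ℕ) : ℝ := negaShift m f d 0

/-- A digit sequence for the alphabet sizes `m`. -/
def ValidDigits (m : ℕ → ℕ) (d : ℕ → ℕ) : Prop := ∀ n, d n ≤ m n

/-! ### Auxiliary definitions -/

/-- The twisted index. -/
def twIdx (m : ℕ → ℕ) (n i : ℕ) : ℕ := if Odd n then i else m n - i

lemma tw_eq (m : ℕ → ℕ) (f : ℕ → ℕ → ℝ) (n i : ℕ) :
    tw m f n i = f n (twIdx m n i) := by
  unfold tw twIdx; split <;> rfl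

lemma twIdx_le {m : ℕ → ℕ} {n i : ℕ} (h : i ≤ m n) : twIdx m n i ≤ m n := by
  unfold twIdx; split
  · exact h
  · omega

/-- Term of the series. -/
def sterm (m : ℕ → ℕ) (f : ℕ → ℕ → ℝ) (e : ℕ → ℕ) (k j : ℕ) : ℝ :=
  tw m (rowSum f) (k + j + 1) (e (k + j + 1)) *
    ∏ t ∈ Finset.Icc (k + 1) (k + j), tw m f t (e t)

lemma negaShift_eq (m : ℕ → ℕ) (f : ℕ → ℕ → ℝ) (e : ℕ → ℕ) (k : ℕ) :
    negaShift m f e k = ∑' j, sterm m f e k j := rfl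

def nterm (m : ℕ → ℕ) (f : ℕ → ℕ → ℝ) (e : ℕ → ℕ) (j : ℕ) : ℝ :=
  tw m (rowSum f) (j + 1) (e (j + 1)) * ∏ t ∈ Finset.Icc 1 j, tw m f t (e t)

lemma sterm_zero (m : ℕ → ℕ) (f : ℕ → ℕ → ℝ) (e : ℕ → ℕ) (j : ℕ) :
    sterm m f e 0 j = nterm m f e j := by
  simp [sterm, nterm, Nat.zero_add]

/-- Partial products over `Icc (k+1) (k+j)`. -/
def Pt (m : ℕ → ℕ) (f : ℕ → ℕ → ℝ) (e : ℕ → ℕ) (k j : ℕ) : ℝ :=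
  ∏ t ∈ Finset.Icc (k + 1) (k + j), tw m f t (e t)

lemma Pt_zero (m : ℕ → ℕ) (f : ℕ → ℕ → ℝ) (e : ℕ → ℕ) (k : ℕ) : Pt m f e k 0 = 1 := by
  simp [Pt]

lemma Pt_succ (m : ℕ → ℕ) (f : ℕ → ℕ → ℝ) (e : ℕ → ℕ) (k j : ℕ) :
    Pt m f e k (j + 1) = Pt m f e k j * tw m f (k + j + 1) (e (k + j + 1)) := by
  unfold Pt
  rw [show k + (j + 1) = (k + j) + 1 by omega,
    Finset.prod_Icc_succ_top (by omega) (fun t => tw m f t (e t))]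

lemma sterm_eq_Pt (m : ℕ → ℕ) (f : ℕ → ℕ → ℝ) (e : ℕ → ℕ) (k j : ℕ) :
    sterm m f e k j = tw m (rowSum f) (k + j + 1) (e (k + j + 1)) * Pt m f e k j := rfl

/-! ### Bounds for the `q`-side -/

section qbounds

variable {m : ℕ → ℕ} {q : ℕ → ℕ → ℝ}
variable (hq1 : ∀ n i, i ≤ m n → 0 < q n i)
variable (hq2 : ∀ n, ∑ i ∈ Finset.range (m n + 1), q n i = 1)

include hq1 in
lemma tw_q_pos {n i : ℕ} (h : i ≤ m n) : 0 < tw m q n i := by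
  rw [tw_eq]; exact hq1 _ _ (twIdx_le h)

include hq1 hq2 in
lemma tw_q_le_one {n i : ℕ} (h : i ≤ m n) : tw m q n i ≤ 1 := by
  rw [tw_eq]
  rw [← hq2 n]
  refine Finset.single_le_sum (fun i hi => ?_) ?_
  · exact (hq1 n i (by simp at hi; omega)).le
  · simp [Nat.lt_succ_iff]; exact twIdx_le h

include hq1 in
lemma tw_rowSum_q_nonneg {n i : ℕ} (h : i ≤ m n) : 0 ≤ tw m (rowSum q) n i := by
  rw [tw_eq]
  refine Finset.sum_nonneg fun t ht => ?_
  simp at ht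
  exact (hq1 n t (by have := twIdx_le h; omega)).le

include hq1 hq2 in
lemma tw_rowSum_q_le {n i : ℕ} (h : i ≤ m n) :
    tw m (rowSum q) n i ≤ 1 - tw m q n i := by
  rw [tw_eq, tw_eq]
  set j := twIdx m n i with hj
  have hjm : j ≤ m n := twIdx_le h
  have h1 : rowSum q n j + q n j = rowSum q n (j + 1) := (Finset.sum_range_succ _ _).symm
  have h2 : rowSum q n (j + 1) ≤ rowSum q n (m n + 1) := by
    refine Finset.sum_le_sum_of_subset_of_nonneg ?_ fun t ht _ => ?_
    · exact Finset.range_subset_range.2 (by omega)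
    · simp at ht
      exact (hq1 n t (by omega)).le
  have h3 : rowSum q n (m n + 1) = 1 := hq2 n
  linarith

variable {e : ℕ → ℕ} (he : ValidDigits m e)

include hq1 he in
lemma Pt_q_pos (k j : ℕ) : 0 < Pt m q e k j := by
  refine Finset.prod_pos fun t _ => tw_q_pos hq1 (he t)

include hq1 hq2 he in
lemma Pt_q_le_one (k j : ℕ) : Pt m q e k j ≤ 1 := by
  refine Finset.prod_le_one (fun t _ => (tw_q_pos hq1 (he t)).le)
    (fun t _ => tw_q_le_one hq1 hq2 (he t))

include hq1 he in
lemma sterm_q_nonneg (k j : ℕ) : 0 ≤ sterm m q e k j :=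
  mul_nonneg (tw_rowSum_q_nonneg hq1 (he _)) (Pt_q_pos hq1 he k j).le

include hq1 hq2 he in
lemma sterm_q_le (k j : ℕ) : sterm m q e k j ≤ Pt m q e k j - Pt m q e k (j + 1) := by
  rw [sterm_eq_Pt, Pt_succ]
  have h1 : tw m (rowSum q) (k + j + 1) (e (k + j + 1)) ≤ 1 - tw m q (k + j + 1) (e (k + j + 1)) :=
    tw_rowSum_q_le hq1 hq2 (he _)
  have h2 : 0 < Pt m q e k j := Pt_q_pos hq1 he k j
  nlinarith

include hq1 hq2 he in
lemma sterm_q_sum_le (k N : ℕ) : ∑ j ∈ Finset.range N, sterm m q e k j ≤ 1 := by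
  calc ∑ j ∈ Finset.range N, sterm m q e k j
      ≤ ∑ j ∈ Finset.range N, (Pt m q e k j - Pt m q e k (j + 1)) :=
        Finset.sum_le_sum fun j _ => sterm_q_le hq1 hq2 he k j
    _ = Pt m q e k 0 - Pt m q e k N := Finset.sum_range_sub' _ _
    _ ≤ 1 := by
        rw [Pt_zero]
        have := (Pt_q_pos hq1 he k N).le
        linarith

include hq1 hq2 he in
lemma sterm_q_summable (k : ℕ) : Summable (sterm m q e k) :=
  summable_of_sum_range_le (fun j => sterm_q_nonneg hq1 he k j)
    (fun N => sterm_q_sum_le hq1 hq2 he k N)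

include hq1 hq2 he in
lemma negaShift_mem (k : ℕ) : negaShift m q e k ∈ Set.Icc (0:ℝ) 1 := by
  rw [negaShift_eq]
  constructor
  · exact tsum_nonneg fun j => sterm_q_nonneg hq1 he k j
  · exact Summable.tsum_le_of_sum_range_le (sterm_q_summable hq1 hq2 he k)
      (fun N => sterm_q_sum_le hq1 hq2 he k N)

end qbounds
/-! ### Splitting and special digit sequences -/

lemma Icc_one_eq_Ioc (n : ℕ) : Finset.Icc 1 n = Finset.Ioc 0 n := Finset.Icc_add_one_left_eq_Ioc 0 n

lemma prod_Icc_split (f : ℕ → ℝ) (n j : ℕ) :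
    ∏ t ∈ Finset.Icc 1 (n + j), f t =
      (∏ t ∈ Finset.Icc 1 n, f t) * ∏ t ∈ Finset.Icc (n + 1) (n + j), f t := by
  rw [Icc_one_eq_Ioc, Icc_one_eq_Ioc, Finset.Icc_add_one_left_eq_Ioc]
  exact (Finset.prod_Ioc_consecutive f (Nat.zero_le n) (Nat.le_add_right n j)).symm

section split

variable {m : ℕ → ℕ} {q : ℕ → ℕ → ℝ}
variable (hq1 : ∀ n i, i ≤ m n → 0 < q n i)
variable (hq2 : ∀ n, ∑ i ∈ Finset.range (m n + 1), q n i = 1)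
variable {e : ℕ → ℕ} (he : ValidDigits m e)

include hq1 hq2 he in
lemma nterm_summable : Summable (nterm m q e) := by
  have := sterm_q_summable hq1 hq2 he 0
  refine this.congr fun j => sterm_zero m q e j

include hq1 hq2 he in
lemma negaVal_split (n : ℕ) :
    negaVal m q e = (∑ j ∈ Finset.range n, nterm m q e j) +
      (∏ t ∈ Finset.Icc 1 n, tw m q t (e t)) * negaShift m q e n := by
  have hsum : Summable (nterm m q e) := nterm_summable hq1 hq2 he
  have h1 : negaVal m q e = ∑' j, nterm m q e j := by
    rw [negaVal, negaShift_eq]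
    exact tsum_congr fun j => sterm_zero m q e j
  rw [h1, ← Summable.sum_add_tsum_nat_add n hsum]
  congr 1
  have h2 : ∀ j : ℕ, nterm m q e (j + n) =
      (∏ t ∈ Finset.Icc 1 n, tw m q t (e t)) * sterm m q e n j := by
    intro j
    rw [nterm, sterm]
    rw [show j + n + 1 = n + j + 1 by omega, show j + n = n + j by omega,
      prod_Icc_split]
    ring
  rw [negaShift_eq, ← tsum_mul_left]
  exact tsum_congr h2

end split

/-- Zero digit at position `t` (gives `β̃ = 0`). -/
def zdig (m : ℕ → ℕ) (t : ℕ) : ℕ := if Odd t then 0 else m t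

/-- Extend `e` by zero digits after position `n`. -/
def zext (m : ℕ → ℕ) (e : ℕ → ℕ) (n : ℕ) : ℕ → ℕ := fun t => if t ≤ n then e t else zdig m t

lemma zext_valid {m : ℕ → ℕ} {e : ℕ → ℕ} (he : ValidDigits m e) (n : ℕ) :
    ValidDigits m (zext m e n) := by
  intro t
  unfold zext zdig
  split
  · exact he t
  · split
    · omega
    · exact le_refl _

lemma tw_rowSum_zdig (m : ℕ → ℕ) (f : ℕ → ℕ → ℝ) (t : ℕ) :
    tw m (rowSum f) t (zdig m t) = 0 := by
  unfold tw zdig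
  split
  · simp [rowSum]
  · simp [rowSum]

lemma negaVal_zext (m : ℕ → ℕ) (f : ℕ → ℕ → ℝ) (e : ℕ → ℕ) (n : ℕ) :
    negaVal m f (zext m e n) = ∑ j ∈ Finset.range n, nterm m f e j := by
  rw [negaVal, negaShift_eq]
  have h0 : ∀ j ∉ Finset.range n, sterm m f (zext m e n) 0 j = 0 := by
    intro j hj
    simp only [Finset.mem_range, not_lt] at hj
    rw [sterm_zero, nterm]
    have : zext m e n (j + 1) = zdig m (j + 1) := by
      unfold zext; rw [if_neg (by omega)]
    rw [this, tw_rowSum_zdig, zero_mul]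
  rw [tsum_eq_sum h0]
  refine Finset.sum_congr rfl fun j hj => ?_
  simp only [Finset.mem_range] at hj
  rw [sterm_zero, nterm, nterm]
  congr 1
  · congr 1
    unfold zext; rw [if_pos (by omega)]
  · refine Finset.prod_congr rfl fun t ht => ?_
    simp only [Finset.mem_Icc] at ht
    congr 1
    unfold zext; rw [if_pos (by omega)]
/-! ### Degeneracy and the bump construction -/

/-- Position `j` is degenerate for digits `d`: the cylinder touches the right endpoint. -/
def Degen (m : ℕ → ℕ) (d : ℕ → ℕ) (j : ℕ) : Prop := if Odd j then d j = m j else d j = 0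

lemma rowSum_succ (f : ℕ → ℕ → ℝ) (n k : ℕ) :
    rowSum f n (k + 1) = rowSum f n k + f n k := Finset.sum_range_succ _ _

lemma degen_tw_sum {m : ℕ → ℕ} {d : ℕ → ℕ} {f : ℕ → ℕ → ℝ}
    (hf2 : ∀ n, ∑ i ∈ Finset.range (m n + 1), f n i = 1)
    {j : ℕ} (hdj : Degen m d j) :
    tw m (rowSum f) j (d j) + tw m f j (d j) = 1 := by
  have key : rowSum f j (m j) + f j (m j) = 1 := by
    rw [← rowSum_succ]
    exact hf2 j
  unfold Degen at hdj
  unfold tw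
  split
  · rename_i h
    rw [if_pos h] at hdj
    rw [hdj]; exact key
  · rename_i h
    rw [if_neg h] at hdj
    rw [hdj, Nat.sub_zero]; exact key

/-- The one-step identity: adding the `n+1`-st term and updating the product. -/
lemma cp_step (m : ℕ → ℕ) (f : ℕ → ℕ → ℝ) (d : ℕ → ℕ) (n : ℕ) :
    (∑ j ∈ Finset.range (n + 1), nterm m f d j) = (∑ j ∈ Finset.range n, nterm m f d j) +
      tw m (rowSum f) (n + 1) (d (n + 1)) * ∏ t ∈ Finset.Icc 1 n, tw m f t (d t) := by
  rw [Finset.sum_range_succ]; rfl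

lemma PP_step (m : ℕ → ℕ) (f : ℕ → ℕ → ℝ) (d : ℕ → ℕ) (n : ℕ) :
    (∏ t ∈ Finset.Icc 1 (n + 1), tw m f t (d t)) =
      (∏ t ∈ Finset.Icc 1 n, tw m f t (d t)) * tw m f (n + 1) (d (n + 1)) :=
  Finset.prod_Icc_succ_top (by omega) _

/-- Degeneracy chain: the right endpoint data is constant over a degenerate stretch. -/
lemma degen_chain {m : ℕ → ℕ} {d : ℕ → ℕ} {f : ℕ → ℕ → ℝ}
    (hf2 : ∀ n, ∑ i ∈ Finset.range (m n + 1), f n i = 1)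
    {k n : ℕ} (hkn : k ≤ n) (hdeg : ∀ j, k < j → j ≤ n → Degen m d j) :
    (∑ j ∈ Finset.range n, nterm m f d j) + ∏ t ∈ Finset.Icc 1 n, tw m f t (d t) =
    (∑ j ∈ Finset.range k, nterm m f d j) + ∏ t ∈ Finset.Icc 1 k, tw m f t (d t) := by
  induction n, hkn using Nat.le_induction with
  | base => rfl
  | succ n hn ih =>
    rw [cp_step, PP_step]
    have h1 : tw m (rowSum f) (n + 1) (d (n + 1)) + tw m f (n + 1) (d (n + 1)) = 1 :=
      degen_tw_sum hf2 (hdeg (n + 1) (by omega) (by omega))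
    have h2 := ih (fun j hj1 hj2 => hdeg j hj1 (by omega))
    rw [add_assoc, show tw m (rowSum f) (n + 1) (d (n + 1)) * (∏ t ∈ Finset.Icc 1 n, tw m f t (d t))
        + (∏ t ∈ Finset.Icc 1 n, tw m f t (d t)) * tw m f (n + 1) (d (n + 1))
      = (tw m (rowSum f) (n + 1) (d (n + 1)) + tw m f (n + 1) (d (n + 1)))
        * ∏ t ∈ Finset.Icc 1 n, tw m f t (d t) from by ring, h1, one_mul]
    exact h2
/-- The bumped digit at a non-degenerate position. -/
def bdig (m : ℕ → ℕ) (d : ℕ → ℕ) (k : ℕ) : ℕ := if Odd k then d k + 1 else d k - 1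

lemma bump_tw (m : ℕ → ℕ) (f : ℕ → ℕ → ℝ) {d : ℕ → ℕ} {k : ℕ}
    (hk : d k ≤ m k) (hnd : ¬ Degen m d k) :
    tw m (rowSum f) k (bdig m d k) = tw m (rowSum f) k (d k) + tw m f k (d k) := by
  unfold Degen at hnd
  unfold tw bdig
  by_cases h : Odd k
  · rw [if_pos h] at hnd ⊢
    rw [if_pos h, if_pos h, if_pos h]
    exact rowSum_succ f k (d k)
  · rw [if_neg h] at hnd ⊢
    rw [if_neg h, if_neg h, if_neg h]
    rw [show m k - (d k - 1) = (m k - d k) + 1 by omega]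
    exact rowSum_succ f k (m k - d k)

lemma bdig_le {m : ℕ → ℕ} {d : ℕ → ℕ} {k : ℕ} (hk : d k ≤ m k) (hnd : ¬ Degen m d k) :
    bdig m d k ≤ m k := by
  unfold Degen at hnd
  unfold bdig
  by_cases h : Odd k
  · rw [if_pos h] at hnd; rw [if_pos h]; omega
  · rw [if_neg h] at hnd; rw [if_neg h]; omega

lemma update_valid {m : ℕ → ℕ} {d : ℕ → ℕ} (hd : ValidDigits m d) {k : ℕ}
    (hnd : ¬ Degen m d k) : ValidDigits m (Function.update d k (bdig m d k)) := by
  intro t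
  by_cases h : t = k
  · subst h; rw [Function.update_self]; exact bdig_le (hd t) hnd
  · rw [Function.update_of_ne h]; exact hd t

/-- Value (for arbitrary `f`) of the right endpoint of the cylinder of rank `k`,
realized by bumping the digit at the non-degenerate position `k` and putting zeros after. -/
lemma negaVal_bump (m : ℕ → ℕ) (f : ℕ → ℕ → ℝ) {d : ℕ → ℕ} {k : ℕ} (hk1 : 1 ≤ k)
    (hk : d k ≤ m k) (hnd : ¬ Degen m d k) :
    negaVal m f (zext m (Function.update d k (bdig m d k)) k) =
      (∑ j ∈ Finset.range k, nterm m f d j) + ∏ t ∈ Finset.Icc 1 k, tw m f t (d t) := by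
  rw [negaVal_zext]
  set d' := Function.update d k (bdig m d k) with hd'
  obtain ⟨n, rfl⟩ : ∃ n, k = n + 1 := ⟨k - 1, by omega⟩
  rw [Finset.sum_range_succ, cp_step, PP_step]
  have hagree : ∀ t, t ≤ n → d' t = d t := by
    intro t ht
    rw [hd', Function.update_of_ne (by omega)]
  have hsum_eq : ∑ j ∈ Finset.range n, nterm m f d' j = ∑ j ∈ Finset.range n, nterm m f d j := by
    refine Finset.sum_congr rfl fun j hj => ?_
    simp only [Finset.mem_range] at hj
    unfold nterm
    rw [hagree (j + 1) (by omega)]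
    congr 1
    refine Finset.prod_congr rfl fun t ht => ?_
    simp only [Finset.mem_Icc] at ht
    rw [hagree t (by omega)]
  have hprod_eq : (∏ t ∈ Finset.Icc 1 n, tw m f t (d' t)) = ∏ t ∈ Finset.Icc 1 n, tw m f t (d t) := by
    refine Finset.prod_congr rfl fun t ht => ?_
    simp only [Finset.mem_Icc] at ht
    rw [hagree t ht.2]
  have hlast : nterm m f d' n = (tw m (rowSum f) (n + 1) (d (n + 1)) + tw m f (n + 1) (d (n + 1)))
      * ∏ t ∈ Finset.Icc 1 n, tw m f t (d t) := by
    unfold nterm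
    rw [hprod_eq]
    congr 1
    rw [hd', Function.update_self]
    exact bump_tw m f hk hnd
  rw [hsum_eq, hlast]
  ring
/-! ### Limits of the partial products -/

lemma negaVal_mem {m : ℕ → ℕ} {q : ℕ → ℕ → ℝ}
    (hq1 : ∀ n i, i ≤ m n → 0 < q n i)
    (hq2 : ∀ n, ∑ i ∈ Finset.range (m n + 1), q n i = 1)
    {e : ℕ → ℕ} (he : ValidDigits m e) : negaVal m q e ∈ Set.Icc (0:ℝ) 1 :=
  negaShift_mem hq1 hq2 he 0

lemma PPq_pos {m : ℕ → ℕ} {q : ℕ → ℕ → ℝ}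
    (hq1 : ∀ n i, i ≤ m n → 0 < q n i) {d : ℕ → ℕ} (hd : ValidDigits m d) (n : ℕ) :
    0 < ∏ t ∈ Finset.Icc 1 n, tw m q t (d t) :=
  Finset.prod_pos fun t _ => tw_q_pos hq1 (hd t)

lemma PPq_tendsto {m : ℕ → ℕ} {q : ℕ → ℕ → ℝ}
    (hq4 : ∀ d, ValidDigits m d →
      Tendsto (fun N => ∏ j ∈ Finset.Icc 1 N, q j (d j)) atTop (𝓝 0))
    {d : ℕ → ℕ} (hd : ValidDigits m d) :
    Tendsto (fun n => ∏ t ∈ Finset.Icc 1 n, tw m q t (d t)) atTop (𝓝 0) := by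
  have h := hq4 (fun j => twIdx m j (d j)) (fun j => twIdx_le (hd j))
  refine h.congr fun n => ?_
  exact Finset.prod_congr rfl fun t _ => (tw_eq m q t (d t)).symm

lemma PPp_tendsto {m : ℕ → ℕ} {p : ℕ → ℕ → ℝ}
    (hp4 : ∀ d, ValidDigits m d →
      Tendsto (fun N => ∏ j ∈ Finset.Icc 1 N, |p j (d j)|) atTop (𝓝 0))
    {d : ℕ → ℕ} (hd : ValidDigits m d) :
    Tendsto (fun n => ∏ t ∈ Finset.Icc 1 n, tw m p t (d t)) atTop (𝓝 0) := by
  rw [tendsto_zero_iff_abs_tendsto_zero]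
  have h := hp4 (fun j => twIdx m j (d j)) (fun j => twIdx_le (hd j))
  refine h.congr fun n => ?_
  rw [Function.comp_apply, ← Finset.abs_prod]
  congr 1
  exact Finset.prod_congr rfl fun t _ => (tw_eq m p t (d t)).symm

lemma key_slope {G : ℝ → ℝ} {s : Set ℝ} {x₀ L : ℝ} (hx : x₀ ∈ s)
    (hderiv : HasDerivWithinAt G L s x₀) {a b : ℕ → ℝ}
    (ha : ∀ᶠ n in atTop, a n ∈ s) (hb : ∀ᶠ n in atTop, b n ∈ s)
    (hab : ∀ᶠ n in atTop, a n ≤ x₀ ∧ x₀ ≤ b n ∧ a n < b n)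
    (h0 : Tendsto (fun n => b n - a n) atTop (𝓝 0)) :
    Tendsto (fun n => (G (b n) - G (a n)) / (b n - a n)) atTop (𝓝 L) := by
  set sl : ℝ → ℝ := fun y => if y = x₀ then L else (G y - G x₀) / (y - x₀) with hsl
  have hslope : Tendsto sl (𝓝[s] x₀) (𝓝 L) := by
    rw [hasDerivWithinAt_iff_tendsto_slope] at hderiv
    have h1 : Tendsto sl (𝓝[s \ {x₀}] x₀) (𝓝 L) := by
      refine hderiv.congr' ?_
      filter_upwards [self_mem_nhdsWithin] with y hy
      rw [slope_def_field, hsl]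
      simp only [if_neg (show y ≠ x₀ from hy.2)]
    have h2 : Tendsto sl (𝓝[{x₀}] x₀) (𝓝 L) := by
      rw [nhdsWithin_singleton]
      have : sl x₀ = L := by simp [hsl]
      conv => rw [← this]
      exact tendsto_pure_nhds sl x₀
    have hsub : s ⊆ (s \ {x₀}) ∪ {x₀} := by
      intro y hy
      by_cases hyx : y = x₀
      · exact Or.inr hyx
      · exact Or.inl ⟨hy, hyx⟩
    have hcomb : Tendsto sl (𝓝[(s \ {x₀}) ∪ {x₀}] x₀) (𝓝 L) := by
      rw [nhdsWithin_union]; exact tendsto_sup.2 ⟨h1, h2⟩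
    exact hcomb.mono_left (nhdsWithin_mono x₀ hsub)
  -- a n → x₀ and b n → x₀
  have hax : Tendsto (fun n => x₀ - a n) atTop (𝓝 0) := by
    refine squeeze_zero' ?_ ?_ h0
    · filter_upwards [hab] with n hn; linarith [hn.1]
    · filter_upwards [hab] with n hn; linarith [hn.2.1]
  have hbx : Tendsto (fun n => b n - x₀) atTop (𝓝 0) := by
    refine squeeze_zero' ?_ ?_ h0
    · filter_upwards [hab] with n hn; linarith [hn.2.1]
    · filter_upwards [hab] with n hn; linarith [hn.1]
  have ta : Tendsto a atTop (𝓝[s] x₀) := by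
    refine tendsto_nhdsWithin_of_tendsto_nhds_of_eventually_within _ ?_ ha
    have := hax.const_sub x₀
    simpa using this
  have tb : Tendsto b atTop (𝓝[s] x₀) := by
    refine tendsto_nhdsWithin_of_tendsto_nhds_of_eventually_within _ ?_ hb
    have := hbx.add_const x₀
    simpa using this
  have sa : Tendsto (fun n => sl (a n)) atTop (𝓝 L) := hslope.comp ta
  have sb : Tendsto (fun n => sl (b n)) atTop (𝓝 L) := hslope.comp tb
  have hE : Tendsto (fun n => |sl (b n) - L| + |sl (a n) - L|) atTop (𝓝 0) := by
    have h1 : Tendsto (fun n => sl (b n) - L) atTop (𝓝 0) := by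
      simpa using sb.sub_const L
    have h2 : Tendsto (fun n => sl (a n) - L) atTop (𝓝 0) := by
      simpa using sa.sub_const L
    simpa using h1.abs.add h2.abs
  have key : Tendsto (fun n => (G (b n) - G (a n)) / (b n - a n) - L) atTop (𝓝 0) := by
    rw [tendsto_zero_iff_abs_tendsto_zero]
    apply squeeze_zero' (g := fun n => |sl (b n) - L| + |sl (a n) - L|)
    · filter_upwards with n; exact abs_nonneg _
    · filter_upwards [hab] with n hn
      obtain ⟨h1, h2, h3⟩ := hn
      have hba : (0:ℝ) < b n - a n := by linarith
      -- G values via slopes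
      have Gb : G (b n) - G x₀ = sl (b n) * (b n - x₀) := by
        by_cases h : b n = x₀
        · simp [h]
        · rw [hsl]; simp only [if_neg h]
          exact (div_mul_cancel₀ _ (sub_ne_zero.2 h)).symm
      have Ga : G (a n) - G x₀ = sl (a n) * (a n - x₀) := by
        by_cases h : a n = x₀
        · simp [h]
        · rw [hsl]; simp only [if_neg h]
          exact (div_mul_cancel₀ _ (sub_ne_zero.2 h)).symm
      have hnum : G (b n) - G (a n) - L * (b n - a n)
          = (sl (b n) - L) * (b n - x₀) - (sl (a n) - L) * (a n - x₀) := by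
        have : G (b n) - G (a n) = (G (b n) - G x₀) - (G (a n) - G x₀) := by ring
        rw [this, Gb, Ga]; ring
      have habs : |G (b n) - G (a n) - L * (b n - a n)|
          ≤ (|sl (b n) - L| + |sl (a n) - L|) * (b n - a n) := by
        rw [hnum]
        calc |(sl (b n) - L) * (b n - x₀) - (sl (a n) - L) * (a n - x₀)|
            ≤ |(sl (b n) - L) * (b n - x₀)| + |(sl (a n) - L) * (a n - x₀)| :=
              abs_sub _ _
          _ = |sl (b n) - L| * |b n - x₀| + |sl (a n) - L| * |a n - x₀| := by
              rw [abs_mul, abs_mul]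
          _ ≤ |sl (b n) - L| * (b n - a n) + |sl (a n) - L| * (b n - a n) := by
              gcongr
              · rw [abs_of_nonneg (by linarith)]; linarith
              · rw [abs_of_nonpos (by linarith)]; linarith
          _ = (|sl (b n) - L| + |sl (a n) - L|) * (b n - a n) := by ring
      simp only [Function.comp]
      have : (G (b n) - G (a n)) / (b n - a n) - L
          = (G (b n) - G (a n) - L * (b n - a n)) / (b n - a n) := by
        field_simp
      rw [this, abs_div, abs_of_pos hba, div_le_iff₀ hba]
      exact habs
    · exact hE
  have := key.add_const L
  simpa using this

/-- if `F` has a derivative at a nega-`Q̃`-irrational point `x₀`, then this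
derivative equals `lim_n Π_{j≤n} (p̃_{i_j(x₀),j} / q̃_{i_j(x₀),j})`. -/
theorem stmt12 (m : ℕ → ℕ) (q p : ℕ → ℕ → ℝ)
    (hq1 : ∀ n i, i ≤ m n → 0 < q n i)
    (hq2 : ∀ n, ∑ i ∈ Finset.range (m n + 1), q n i = 1)
    (hq4 : ∀ d, ValidDigits m d →
      Tendsto (fun N => ∏ j ∈ Finset.Icc 1 N, q j (d j)) atTop (𝓝 0))
    (hp1 : ∀ n i, i ≤ m n → p n i ∈ Set.Ioo (-1 : ℝ) 1)
    (hp2 : ∀ n, ∑ i ∈ Finset.range (m n + 1), p n i = 1)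
    (hp3 : ∀ n k, 1 ≤ k → k ≤ m n → rowSum p n k ∈ Set.Ioo (0 : ℝ) 1)
    (hp4 : ∀ d, ValidDigits m d →
      Tendsto (fun N => ∏ j ∈ Finset.Icc 1 N, |p j (d j)|) atTop (𝓝 0))
    (G : ℝ → ℝ)
    (hG : ∀ d, ValidDigits m d → G (negaVal m q d) = negaVal m p d)
    (hsurj : ∀ x ∈ Set.Icc (0 : ℝ) 1, ∃ d, ValidDigits m d ∧ x = negaVal m q d)
    (d : ℕ → ℕ) (hd : ValidDigits m d)
    -- `x₀ := negaVal m q d` is nega-`Q̃`-irrational: its representation is unique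
    (hirr : ∀ d', ValidDigits m d' → negaVal m q d' = negaVal m q d →
      ∀ n, 1 ≤ n → d' n = d n)
    (L : ℝ)
    (hderiv : HasDerivWithinAt G L (Set.Icc (0 : ℝ) 1) (negaVal m q d)) :
    Tendsto (fun n : ℕ => ∏ j ∈ Finset.Icc 1 n, tw m p j (d j) / tw m q j (d j))
      atTop (𝓝 L) := by
  classical
  set x₀ := negaVal m q d with hx₀
  set cq : ℕ → ℝ := fun n => ∑ j ∈ Finset.range n, nterm m q d j with hcq
  set cp : ℕ → ℝ := fun n => ∑ j ∈ Finset.range n, nterm m p d j with hcp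
  set PQ : ℕ → ℝ := fun n => ∏ t ∈ Finset.Icc 1 n, tw m q t (d t) with hPQ
  set PP : ℕ → ℝ := fun n => ∏ t ∈ Finset.Icc 1 n, tw m p t (d t) with hPP
  have hPQpos : ∀ n, 0 < PQ n := PPq_pos hq1 hd
  have hPQ0 : Tendsto PQ atTop (𝓝 0) := PPq_tendsto hq4 hd
  have hPP0 : Tendsto PP atTop (𝓝 0) := PPp_tendsto hp4 hd
  have hx01 : x₀ ∈ Set.Icc (0:ℝ) 1 := negaVal_mem hq1 hq2 hd
  have hratio : ∀ n, (∏ j ∈ Finset.Icc 1 n, tw m p j (d j) / tw m q j (d j)) = PP n / PQ n := by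
    intro n
    rw [hPP, hPQ]
    exact Finset.prod_div_distrib _ _
  -- the left endpoints of the cylinders
  set a : ℕ → ℝ := fun n => negaVal m q (zext m d n) with ha_def
  have haval : ∀ n, a n = cq n := fun n => negaVal_zext m q d n
  have haG : ∀ n, G (a n) = cp n := by
    intro n
    rw [ha_def]
    simp only
    rw [hG _ (zext_valid hd n), negaVal_zext]
  have hamem : ∀ n, a n ∈ Set.Icc (0:ℝ) 1 := fun n => negaVal_mem hq1 hq2 (zext_valid hd n)
  have hsplit : ∀ n, x₀ = cq n + PQ n * negaShift m q d n := fun n => negaVal_split hq1 hq2 hd n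
  have hshift : ∀ n, negaShift m q d n ∈ Set.Icc (0:ℝ) 1 := fun n => negaShift_mem hq1 hq2 hd n
  by_cases hB : ∀ k, 1 ≤ k → Degen m d k
  · -- fully degenerate case: x₀ = 1
    have hchain : ∀ n, cq n + PQ n = 1 := by
      intro n
      have := degen_chain hq2 (Nat.zero_le n) (fun j hj _ => hB j hj)
      simpa using this
    have hchainp : ∀ n, cp n + PP n = 1 := by
      intro n
      have := degen_chain hp2 (Nat.zero_le n) (fun j hj _ => hB j hj)
      simpa using this
    have hx1 : x₀ = 1 := by
      have hsum := nterm_summable hq1 hq2 hd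
      have h1 : Tendsto cq atTop (𝓝 x₀) := by
        have h2 : x₀ = ∑' j, nterm m q d j := by
          rw [hx₀, negaVal, negaShift_eq]
          exact tsum_congr fun j => sterm_zero m q d j
        rw [h2]
        exact hsum.hasSum.tendsto_sum_nat
      have h3 : Tendsto cq atTop (𝓝 1) := by
        have : Tendsto (fun n => 1 - PQ n) atTop (𝓝 1) := by
          simpa using (tendsto_const_nhds (x := (1:ℝ))).sub hPQ0
        refine this.congr fun n => ?_
        linarith [hchain n]
      exact tendsto_nhds_unique h1 h3
    have key := key_slope hx01 hderiv (a := a) (b := fun _ => x₀)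
      (Eventually.of_forall hamem) (Eventually.of_forall fun _ => hx01)
      (Eventually.of_forall fun n => ?_) ?_
    rotate_left
    · refine ⟨?_, le_refl _, ?_⟩
      · rw [haval n]; linarith [hchain n, hPQpos n, hx1]
      · rw [haval n]; linarith [hchain n, hPQpos n, hx1]
    · have : ∀ n, x₀ - a n = PQ n := by
        intro n; rw [haval n]; linarith [hchain n, hx1]
      refine hPQ0.congr fun n => (this n).symm
    -- identify G x₀ = 1
    have hd1 : ∀ n, x₀ - a n = PQ n := by
      intro n; rw [haval n]; linarith [hchain n, hx1]
    have hGa : ∀ n, G (a n) = 1 - PP n := by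
      intro n; rw [haG n]; linarith [hchainp n]
    have hGx1 : G x₀ = 1 := by
      have h1 : Tendsto (fun n => (G x₀ - G (a n)) / (x₀ - a n) * PQ n) atTop (𝓝 (L * 0)) :=
        key.mul hPQ0
      have h2 : ∀ n, (G x₀ - G (a n)) / (x₀ - a n) * PQ n = G x₀ - 1 + PP n := by
        intro n
        rw [hd1 n, hGa n, div_mul_cancel₀ _ (hPQpos n).ne']
        ring
      have h3 : Tendsto (fun n => G x₀ - 1 + PP n) atTop (𝓝 0) := by
        rw [mul_zero] at h1
        exact h1.congr h2
      have h4 : Tendsto (fun n => G x₀ - 1 + PP n) atTop (𝓝 (G x₀ - 1)) := by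
        simpa using (tendsto_const_nhds (x := G x₀ - 1)).add hPP0
      have := tendsto_nhds_unique h3 h4
      linarith
    refine key.congr fun n => ?_
    rw [hratio n, hd1 n, hGa n, hGx1]
    congr 1
    ring
  · -- there is a non-degenerate position
    push_neg at hB
    obtain ⟨K₀, hK₀1, hK₀⟩ := hB
    set Pr : ℕ → Prop := fun k => 1 ≤ k ∧ ¬ Degen m d k with hPr
    have hPrK₀ : Pr K₀ := ⟨hK₀1, hK₀⟩
    -- right endpoints
    set b : ℕ → ℝ := fun n => cq n + PQ n with hb_def
    have hfacts : ∀ n, K₀ ≤ n → b n ∈ Set.Icc (0:ℝ) 1 ∧ G (b n) = cp n + PP n := by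
      intro n hn
      set k := Nat.findGreatest Pr n with hk
      have hkspec : Pr k := Nat.findGreatest_spec hn hPrK₀
      have hkn : k ≤ n := Nat.findGreatest_le n
      have hchain : ∀ j, k < j → j ≤ n → Degen m d j := by
        intro j h1 h2
        by_contra hc
        exact Nat.findGreatest_is_greatest h1 h2 ⟨by omega, hc⟩
      obtain ⟨hk1, hknd⟩ := hkspec
      set bext : ℕ → ℕ := zext m (Function.update d k (bdig m d k)) k with hbext
      have hbvalid : ValidDigits m bext := zext_valid (update_valid hd hknd) k
      have hbq : negaVal m q bext = b n := by
        rw [hbext, negaVal_bump m q hk1 (hd k) hknd, hb_def]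
        simp only
        rw [hcq, hPQ]
        exact (degen_chain hq2 hkn hchain).symm
      have hbp : negaVal m p bext = cp n + PP n := by
        rw [hbext, negaVal_bump m p hk1 (hd k) hknd, hcp, hPP]
        exact (degen_chain hp2 hkn hchain).symm
      constructor
      · rw [← hbq]; exact negaVal_mem hq1 hq2 hbvalid
      · rw [← hbq, hG _ hbvalid, hbp]
    have key := key_slope hx01 hderiv (a := a) (b := b)
      (Eventually.of_forall hamem)
      ((eventually_ge_atTop K₀).mono fun n hn => (hfacts n hn).1)
      (Eventually.of_forall fun n => ?_) ?_
    rotate_left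
    · have h1 := hsplit n
      have h2 := hshift n
      obtain ⟨h2a, h2b⟩ := h2
      have h3 := hPQpos n
      refine ⟨?_, ?_, ?_⟩
      · rw [haval n]; nlinarith
      · rw [hb_def]; simp only; nlinarith
      · rw [haval n, hb_def]; simp only; nlinarith
    · have : ∀ n, b n - a n = PQ n := by
        intro n; rw [haval n, hb_def]; ring
      refine hPQ0.congr fun n => (this n).symm
    refine key.congr' ?_
    filter_upwards [eventually_ge_atTop K₀] with n hn
    rw [hratio n, haG n, (hfacts n hn).2]
    have h1 : b n - a n = PQ n := by rw [haval n, hb_def]; ring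
    rw [h1]
    congr 1
    ring
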